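/- Every edge e of K_i satisfies f(e) ≤ i(i−1)/2 − 1; that is, each edge is excluded from at least one optimal i-vertex path, namely from the optimal path whose two endpoints are the endpoints of e. -/

import Mathlib

open Finset

/-- The length of a path, given as a list of vertices, with respect to the
distance function `d`: the sum of `d` over consecutive entries. -/
def pathLen {V : Type*} (d : V → V → ℝ) (P : List V) : ℝ :=
  ((P.zip P.tail).map fun p => d p.1 p.2).sum

/-- A path (list of vertices) contains the edge `{x, y}` iff `x` and `y`
occur consecutively in it (in either order). -/
def ContainsEdge {V : Type*} (P : List V) (x y : V) : Prop :=
  [x, y] <:+: P ∨ [y, x] <:+: P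

/-- A Hamiltonian path of the whole (finite) vertex type `V` from `u` to `v`:
a duplicate-free list of all vertices starting at `u` and ending at `v`. -/
def IsHamPath {V : Type*} (P : List V) (u v : V) : Prop :=
  P.Nodup ∧ (∀ x : V, x ∈ P) ∧ P.head? = some u ∧ P.getLast? = some v

/-- The frequency of the (unordered) edge `e`: the number of unordered pairs
`{u, v}` of distinct vertices whose optimal path `OP u v` contains `e`. -/
noncomputable def freq {V : Type*} (OP : V → V → List V) (e : Sym2 V) : ℕ :=
  Nat.card {p : Sym2 V // ¬ p.IsDiag ∧
    ∃ u v : V, p = s(u, v) ∧ ∃ x y : V, e = s(x, y) ∧ ContainsEdge (OP u v) x y}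

lemma aux_head {V : Type*} {P : List V} {x a : V} (hn : P.Nodup)
    (hh : P.head? = some x) : ¬ [a, x] <:+: P := by
  rintro ⟨s, t, rfl⟩
  cases s with
  | nil =>
    have hax : a = x := by simpa using hh
    subst hax
    simp at hn
  | cons b s' =>
    have hbx : b = x := by simpa using hh
    subst hbx
    rw [List.append_assoc] at hn
    have hd := List.disjoint_of_nodup_append hn
    exact hd (show b ∈ b :: s' by simp) (by simp)

lemma aux_last {V : Type*} {P : List V} {x y : V} (hn : P.Nodup)
    (hh : P.head? = some x) (hl : P.getLast? = some y) (hlen : 3 ≤ P.length) :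
    ¬ [x, y] <:+: P := by
  rintro ⟨s, t, rfl⟩
  cases s with
  | nil =>
    cases t with
    | nil => simp at hlen
    | cons c t' =>
      rw [show ([] : List V) ++ [x, y] ++ c :: t' = x :: y :: c :: t' from rfl] at hl hn
      rw [List.getLast?_cons_cons, List.getLast?_cons_cons] at hl
      have hy : y ∈ c :: t' := List.mem_of_getLast? hl
      simp only [List.nodup_cons] at hn
      exact hn.2.1 hy
  | cons b s' =>
    have hbx : b = x := by simpa using hh
    subst hbx
    rw [List.append_assoc] at hn
    have hd := List.disjoint_of_nodup_append hn
    exact hd (show b ∈ b :: s' by simp) (by simp)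

/-- Every edge has frequency at most `i(i-1)/2 - 1`: it is
excluded from the optimal path whose two endpoints are its own endpoints. -/
theorem stmt4 {V : Type*} [Fintype V] [DecidableEq V] (i : ℕ) (hi : 4 ≤ i)
    (hcard : Fintype.card V = i)
    (d : V → V → ℝ) (hdsymm : ∀ u v : V, d u v = d v u)
    (hdpos : ∀ u v : V, u ≠ v → 0 < d u v)
    (OP : V → V → List V)
    (hOP : ∀ u v : V, u ≠ v → IsHamPath (OP u v) u v)
    (hOPmin : ∀ u v : V, u ≠ v → ∀ Q : List V, IsHamPath Q u v →
      pathLen d (OP u v) ≤ pathLen d Q)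
    (hOPuniq : ∀ u v : V, u ≠ v → ∀ Q : List V, IsHamPath Q u v →
      pathLen d Q = pathLen d (OP u v) → Q = OP u v)
    (hOPsymm : ∀ u v : V, OP v u = (OP u v).reverse) :
    ∀ x y : V, x ≠ y →
      ¬ ContainsEdge (OP x y) x y ∧ freq OP s(x, y) ≤ i * (i - 1) / 2 - 1 := by
  intro x y hxy
  obtain ⟨hn, hmem, hh, hl⟩ := hOP x y hxy
  have hlen : (OP x y).length = i := by
    rw [← hcard, ← Finset.card_univ, ← List.toFinset_card_of_nodup hn]
    congr 1
    ext z
    simp [hmem z]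
  have hlen3 : 3 ≤ (OP x y).length := by omega
  have h1 : ¬ ContainsEdge (OP x y) x y := by
    rintro (h | h)
    · exact aux_last hn hh hl hlen3 h
    · exact aux_head hn hh h
  refine ⟨h1, ?_⟩
  -- the reversed path also doesn't contain the edge
  have h2 : ¬ ContainsEdge (OP y x) x y := by
    rw [hOPsymm x y]
    rintro (h | h)
    · have : [y, x] <:+: OP x y := by
        have := List.reverse_infix.2 h
        simpa using this
      exact h1 (Or.inr this)
    · have : [x, y] <:+: OP x y := by
        have := List.reverse_infix.2 h
        simpa using this
      exact h1 (Or.inl this)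
  -- symmetry of ContainsEdge
  have hce_symm : ∀ (P : List V) (a b : V), ContainsEdge P a b ↔ ContainsEdge P b a := by
    intro P a b; exact or_comm
  -- counting
  unfold freq
  set S : Set (Sym2 V) := {p : Sym2 V | ¬ p.IsDiag ∧
    ∃ u v : V, p = s(u, v) ∧ ∃ x' y' : V, s(x, y) = s(x', y') ∧ ContainsEdge (OP u v) x' y'} with hS
  have hcoe : Nat.card {p : Sym2 V // ¬ p.IsDiag ∧
      ∃ u v : V, p = s(u, v) ∧ ∃ x' y' : V, s(x, y) = s(x', y') ∧ ContainsEdge (OP u v) x' y'}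
      = S.ncard := Nat.card_coe_set_eq S
  rw [hcoe]
  set T : Set (Sym2 V) := {p : Sym2 V | ¬ p.IsDiag} with hT
  have heT : s(x, y) ∈ T := by simp [hT, hxy]
  have heS : s(x, y) ∉ S := by
    rintro ⟨-, u, v, hp, x', y', he, hc⟩
    rw [Sym2.eq_iff] at hp he
    have hc' : ContainsEdge (OP u v) x y := by
      rcases he with ⟨rfl, rfl⟩ | ⟨rfl, rfl⟩
      · exact hc
      · exact (hce_symm _ _ _).mpr hc
    rcases hp with ⟨rfl, rfl⟩ | ⟨rfl, rfl⟩
    · exact h1 hc'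
    · exact h2 hc'
  have hsub : S ⊆ T \ {s(x, y)} := by
    rintro p ⟨hnd, hrest⟩
    refine ⟨hnd, ?_⟩
    intro hp
    simp only [Set.mem_singleton_iff] at hp
    exact heS (hp ▸ ⟨hnd, hrest⟩)
  have hTfin : T.Finite := Set.toFinite T
  have hTcard : T.ncard = i * (i - 1) / 2 := by
    have h0 : T.ncard = Nat.card {p : Sym2 V // ¬ p.IsDiag} :=
      (Nat.card_coe_set_eq T).symm
    rw [h0, Nat.card_eq_fintype_card, Sym2.card_subtype_not_diag, hcard, Nat.choose_two_right]
  calc S.ncard ≤ (T \ {s(x, y)}).ncard := Set.ncard_le_ncard hsub hTfin.diff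
    _ = T.ncard - 1 := by rw [Set.ncard_diff_singleton_of_mem heT]
    _ = i * (i - 1) / 2 - 1 := by rw [hTcard]
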